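/- Let κ be a regular uncountable cardinal and assume principle C⁻(κ). Then for every family 𝓐 of infinite subsets of ℕ with |𝓐| = κ, either (a) there is a centered subfamily 𝓑 ⊆ 𝓐 of cardinality κ, or (b) there exist k < ω and subfamilies 𝓑_0, …, 𝓑_{k−1} of 𝓐, each of cardinality κ, such that ⋂_{i<k} (⋃𝓑_i) is finite. -/

import Mathlib

open Cardinal

/-- `C` is closed and unbounded (club) in the ordinal `o`. -/
def ClubIn (o : Ordinal) (C : Set Ordinal) : Prop :=
  C ⊆ Set.Iio o ∧ (∀ α < o, ∃ β ∈ C, α < β) ∧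
    ∀ α < o, 0 < α → (∀ β < α, ∃ γ ∈ C, β < γ ∧ γ < α) → α ∈ C

/-- `S` is a stationary subset of the ordinal `o`: it meets every club subset of `o`. -/
def StationaryIn (o : Ordinal) (S : Set Ordinal) : Prop :=
  S ⊆ Set.Iio o ∧ ∀ C, ClubIn o C → (S ∩ C).Nonempty

/-- `S` is a cofinal (unbounded) subset of the ordinal `o`. -/
def CofinalIn (o : Ordinal) (S : Set Ordinal) : Prop :=
  S ⊆ Set.Iio o ∧ ∀ α < o, ∃ β ∈ S, α < β

/-- For a matrix `A` of subsets of `ℕ`, a finite sequence `t ∈ ω^{<ω}` and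
`s : {0,…,|t|-1} → Ordinal`, this is `A[s,t] = ⋂_{i<|t|} A(s i, t i)`. -/
def MatInt (A : Ordinal → ℕ → Set ℕ) (t : List ℕ) (s : Fin t.length → Ordinal) : Set ℕ :=
  ⋂ i, A (s i) (t.get i)

/-- Principle C⁻(κ). -/
def PrincipleCminus (κ : Cardinal) : Prop :=
  ∀ (T : Set (List ℕ)) (A : Ordinal → ℕ → Set ℕ),
    (∃ S : Set Ordinal, CofinalIn κ.ord S ∧
      ∀ t ∈ T, ∀ s : Fin t.length → Ordinal, Function.Injective s →
        (∀ i, s i ∈ S) → (MatInt A t s).Nonempty) ∨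
    (∃ t ∈ T, ∃ D : Fin t.length → Set Ordinal,
      (∀ i, CofinalIn κ.ord (D i)) ∧
      ∀ s : Fin t.length → Ordinal, Function.Injective s →
        (∀ i, s i ∈ D i) → MatInt A t s = ∅)

/-- A family of subsets of `ℕ` is centered if every finite subfamily has
nonempty intersection. -/
def Centered (L : Set (Set ℕ)) : Prop :=
  ∀ F : Finset (Set ℕ), ↑F ⊆ L → (⋂₀ (F : Set (Set ℕ))).Nonempty

/-- The image of a cofinal subset of `κ.ord` under a map injective on it has
cardinality at least `κ`. -/
lemma aux_card_ge {κ : Cardinal.{0}} (hreg : κ.IsRegular) {S : Set Ordinal.{0}}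
    (hsub : S ⊆ Set.Iio κ.ord) (hunb : ∀ α < κ.ord, ∃ β ∈ S, α < β)
    {X : Type} (g : Ordinal → X) (hg : ∀ α ∈ S, ∀ β ∈ S, g α = g β → α = β) :
    κ ≤ #(g '' S) := by
  by_contra h
  push_neg at h
  have hlim : Order.IsSuccLimit κ.ord := Cardinal.isSuccLimit_ord hreg.aleph0_le
  set f : ↥(g '' S) → Ordinal := fun x => Classical.choose x.2 with hf
  have hfspec : ∀ x : ↥(g '' S), f x ∈ S ∧ g (f x) = ↑x := fun x =>
    ⟨(Classical.choose_spec x.2).1, (Classical.choose_spec x.2).2⟩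
  have hsup : (⨆ x, f x + 1) < κ.ord := by
    refine Cardinal.iSup_lt_ord_of_isRegular hreg h (fun x => ?_)
    rw [Ordinal.add_one_eq_succ]
    exact hlim.succ_lt (hsub (hfspec x).1)
  obtain ⟨β, hβS, hβ⟩ := hunb _ hsup
  have hx : g β ∈ g '' S := ⟨β, hβS, rfl⟩
  have : f ⟨g β, hx⟩ = β := hg _ (hfspec ⟨g β, hx⟩).1 _ hβS (hfspec ⟨g β, hx⟩).2
  have hle : f ⟨g β, hx⟩ + 1 ≤ ⨆ x, f x + 1 :=
    Ordinal.le_iSup (fun x => f x + 1) ⟨g β, hx⟩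
  rw [this] at hle
  exact absurd (lt_of_lt_of_le (lt_of_le_of_lt (le_refl β) (lt_add_one β)) hle) (not_lt.2 hβ.le)

/-- Closure points of `g` below `κ.ord` are cofinal. -/
lemma aux_closure {κ : Cardinal.{0}} (hreg : κ.IsRegular) (hunc : ℵ₀ < κ)
    (g : Ordinal → Ordinal) (hg : ∀ β < κ.ord, g β < κ.ord) :
    ∀ β < κ.ord, ∃ δ, β < δ ∧ δ < κ.ord ∧ ∀ γ < δ, g γ < δ := by
  intro β hβ
  have hlim : Order.IsSuccLimit κ.ord := Cardinal.isSuccLimit_ord hreg.aleph0_le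
  let h : ℕ → Ordinal := fun n => Nat.rec (β + 1)
    (fun _ p => max (p + 1) (Ordinal.blsub p (fun γ _ => g γ))) n
  have hh0 : h 0 = β + 1 := rfl
  have hhs : ∀ n, h (n + 1) = max (h n + 1) (Ordinal.blsub (h n) (fun γ _ => g γ)) :=
    fun n => rfl
  have hhlt : ∀ n, h n < κ.ord := by
    intro n
    induction n with
    | zero =>
      rw [hh0, Ordinal.add_one_eq_succ]
      exact hlim.succ_lt hβ
    | succ n ih =>
      rw [hhs]
      refine max_lt ?_ ?_
      · rw [Ordinal.add_one_eq_succ]; exact hlim.succ_lt ih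
      · refine Cardinal.blsub_lt_ord_of_isRegular hreg ?_ (fun γ hγ => hg γ (hγ.trans ih))
        exact (Cardinal.lt_ord.1 ih)
  refine ⟨⨆ n, h n, ?_, ?_, ?_⟩
  · have : h 0 ≤ ⨆ n, h n := Ordinal.le_iSup h 0
    rw [hh0] at this
    exact lt_of_lt_of_le (lt_add_one β) this
  · refine Cardinal.iSup_lt_ord_of_isRegular hreg ?_ hhlt
    rw [Cardinal.mk_nat]; exact hunc
  · intro γ hγ
    rw [Ordinal.lt_iSup_iff] at hγ ⊢
    obtain ⟨n, hn⟩ := hγ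
    refine ⟨n + 1, ?_⟩
    calc g γ < Ordinal.blsub (h n) (fun γ _ => g γ) := Ordinal.lt_blsub _ γ hn
    _ ≤ h (n + 1) := by rw [hhs]; exact le_max_right _ _

/-- Under C⁻(κ), any κ-sized family 𝓐 of infinite subsets of ℕ either has a κ-sized
centered subfamily, or there are `k < ω` and κ-sized subfamilies 𝓑₀, …, 𝓑_{k-1}
with `⋂_{i<k} ⋃ 𝓑ᵢ` finite. -/
theorem statement_14 (κ : Cardinal.{0}) (hreg : κ.IsRegular) (hunc : ℵ₀ < κ)
    (hC : PrincipleCminus κ)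
    (𝓐 : Set (Set ℕ)) (hinf : ∀ A ∈ 𝓐, A.Infinite) (hcard : #𝓐 = κ) :
    (∃ 𝓑 ⊆ 𝓐, #𝓑 = κ ∧ Centered 𝓑) ∨
    (∃ k : ℕ, ∃ 𝓑 : Fin k → Set (Set ℕ), (∀ i, 𝓑 i ⊆ 𝓐 ∧ #(𝓑 i) = κ) ∧
        (⋂ i, ⋃₀ 𝓑 i).Finite) := by
  -- an enumeration of 𝓐 by the ordinals below κ.ord
  have hAeq : Nonempty (↥(Set.Iio κ.ord) ≃ ↥𝓐) := by
    rw [← Cardinal.lift_mk_eq', Ordinal.mk_Iio_ordinal, Cardinal.card_ord, hcard]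
    simp
  obtain ⟨φ⟩ := hAeq
  set E : Ordinal → Set ℕ := fun α =>
    if h : α < κ.ord then (φ ⟨α, h⟩ : Set ℕ) else Set.univ with hE
  have hEmem : ∀ α < κ.ord, E α ∈ 𝓐 := by
    intro α hα
    simp only [hE, dif_pos hα]
    exact (φ ⟨α, hα⟩).2
  have hEinj : ∀ α < κ.ord, ∀ β < κ.ord, E α = E β → α = β := by
    intro α hα β hβ hEq
    simp only [hE, dif_pos hα, dif_pos hβ] at hEq
    have := φ.injective (Subtype.coe_injective hEq)
    exact congrArg Subtype.val this
  set A : Ordinal → ℕ → Set ℕ := fun α n => {x | n ≤ x ∧ x ∈ E α} with hA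
  rcases hC Set.univ A with ⟨S, ⟨hSsub, hSunb⟩, h1⟩ | ⟨t, -, D, hDcof, h2⟩
  · -- case 1 : a centered subfamily
    left
    refine ⟨E '' S, ?_, ?_, ?_⟩
    · rintro B ⟨α, hα, rfl⟩; exact hEmem α (hSsub hα)
    · refine le_antisymm ?_ ?_
      · rw [← hcard]
        refine Cardinal.mk_le_mk_of_subset ?_
        rintro B ⟨α, hα, rfl⟩; exact hEmem α (hSsub hα)
      · exact aux_card_ge hreg hSsub hSunb E
          (fun α hα β hβ => hEinj α (hSsub hα) β (hSsub hβ))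
    · intro F hF
      -- choose ordinals for elements of F
      set c : ↥F → Ordinal := fun B => Classical.choose (hF B.2) with hc
      have hcspec : ∀ B : ↥F, c B ∈ S ∧ E (c B) = ↑B := fun B =>
        ⟨(Classical.choose_spec (hF B.2)).1, (Classical.choose_spec (hF B.2)).2⟩
      have hcinj : Function.Injective c := by
        intro B B' hBB
        have h1 := (hcspec B).2
        have h2 := (hcspec B').2
        rw [hBB, h2] at h1
        exact Subtype.coe_injective h1.symm
      set t : List ℕ := List.replicate F.card 0 with ht
      have hlen : t.length = F.card := List.length_replicate
      set s : Fin t.length → Ordinal := fun i => c (F.equivFin.symm (Fin.cast hlen i)) with hs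
      have hsinj : Function.Injective s :=
        hcinj.comp (F.equivFin.symm.injective.comp (Fin.cast_injective hlen))
      obtain ⟨x, hx⟩ := h1 t (Set.mem_univ t) s hsinj
        (fun i => (hcspec _).1)
      refine ⟨x, ?_⟩
      intro B hB
      have hxi := Set.mem_iInter.1 hx (Fin.cast hlen.symm (F.equivFin ⟨B, hB⟩))
      have hsB : s (Fin.cast hlen.symm (F.equivFin ⟨B, hB⟩)) = c ⟨B, hB⟩ := by
        simp [hs]
      rw [hsB] at hxi
      have : x ∈ E (c ⟨B, hB⟩) := hxi.2
      rwa [(hcspec ⟨B, hB⟩).2] at this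
  · -- case 2 : finitely many subfamilies with finite intersection of unions
    by_cases hk0 : t.length = 0
    · exfalso
      haveI : IsEmpty (Fin t.length) := by rw [hk0]; infer_instance
      have := h2 (fun i => 0) (fun a b _ => isEmptyElim a) (fun i => isEmptyElim i)
      rw [MatInt, Set.iInter_of_empty] at this
      exact Set.univ_nonempty.ne_empty this
    right
    have hlim : Order.IsSuccLimit κ.ord := Cardinal.isSuccLimit_ord hreg.aleph0_le
    -- the "next element" function for each D i
    set next : Fin t.length → Ordinal → Ordinal := fun i β =>
      if h : β < κ.ord then Classical.choose ((hDcof i).2 β h) else 0 with hnext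
    have hnextspec : ∀ (i : Fin t.length) (β), β < κ.ord →
        next i β ∈ D i ∧ β < next i β ∧ next i β < κ.ord := by
      intro i β hβ
      have h := Classical.choose_spec ((hDcof i).2 β hβ)
      simp only [hnext, dif_pos hβ]
      exact ⟨h.1, h.2, (hDcof i).1 h.1⟩
    -- iterated next
    set u : ℕ → Ordinal → Ordinal := fun n δ => Nat.rec δ
      (fun m p => if h : m < t.length then next ⟨m, h⟩ p else p) n with hu
    have hu0 : ∀ δ, u 0 δ = δ := fun _ => rfl
    have hus : ∀ n δ, u (n + 1) δ =
        if h : n < t.length then next ⟨n, h⟩ (u n δ) else u n δ := fun _ _ => rfl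
    have hubasic : ∀ δ < κ.ord, ∀ n, u n δ < κ.ord ∧ δ ≤ u n δ := by
      intro δ hδ n
      induction n with
      | zero => rw [hu0]; exact ⟨hδ, le_refl δ⟩
      | succ n ih =>
        rw [hus]
        by_cases h : n < t.length
        · rw [dif_pos h]
          obtain ⟨-, h2, h3⟩ := hnextspec ⟨n, h⟩ (u n δ) ih.1
          exact ⟨h3, ih.2.trans h2.le⟩
        · rw [dif_neg h]; exact ih
    have humono : ∀ δ < κ.ord, ∀ m n, m ≤ n → u m δ ≤ u n δ := by
      intro δ hδ m n hmn
      induction n with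
      | zero => rw [Nat.le_zero.1 hmn]
      | succ n ih =>
        rcases Nat.lt_or_ge m (n+1) with h | h
        · have := ih (Nat.lt_succ_iff.1 h)
          refine this.trans ?_
          rw [hus]
          by_cases hn : n < t.length
          · rw [dif_pos hn]
            exact (hnextspec ⟨n, hn⟩ (u n δ) (hubasic δ hδ n).1).2.1.le
          · rw [dif_neg hn]
        · rw [Nat.le_antisymm hmn h]
    have hustrict : ∀ δ < κ.ord, ∀ n, n < t.length → u n δ < u (n + 1) δ := by
      intro δ hδ n hn
      rw [hus, dif_pos hn]
      exact (hnextspec ⟨n, hn⟩ (u n δ) (hubasic δ hδ n).1).2.1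
    have humemD : ∀ δ < κ.ord, ∀ (i : Fin t.length), u (↑i + 1) δ ∈ D i := by
      intro δ hδ i
      rw [hus, dif_pos i.2]
      have := (hnextspec ⟨↑i, i.2⟩ (u ↑i δ) (hubasic δ hδ ↑i).1).1
      simpa using this
    set g : Ordinal → Ordinal := fun δ => u t.length δ with hg
    have hgκ : ∀ δ < κ.ord, g δ < κ.ord := fun δ hδ => (hubasic δ hδ t.length).1
    set Δ : Set Ordinal := {δ | δ < κ.ord ∧ ∀ γ < δ, g γ < δ} with hΔ
    have hΔunb : ∀ β < κ.ord, ∃ δ ∈ Δ, β < δ := by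
      intro β hβ
      obtain ⟨δ, h1, h2, h3⟩ := aux_closure hreg hunc g hgκ β hβ
      exact ⟨δ, ⟨h2, h3⟩, h1⟩
    set W : Fin t.length → Set Ordinal := fun i => (fun δ => u (↑i + 1) δ) '' Δ with hW
    have hWsub : ∀ i, W i ⊆ Set.Iio κ.ord := by
      rintro i α ⟨δ, hδ, rfl⟩
      simpa using (hubasic δ hδ.1 (↑i + 1)).1
    have hWunb : ∀ i, ∀ β < κ.ord, ∃ α ∈ W i, β < α := by
      intro i β hβ
      obtain ⟨δ, hδ, hβδ⟩ := hΔunb β hβ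
      refine ⟨u (↑i + 1) δ, ⟨δ, hδ, rfl⟩, lt_of_lt_of_le hβδ (hubasic δ hδ.1 (↑i + 1)).2⟩
    -- key: elements of distinct W i's chosen anywhere are distinct
    have hkey : ∀ (i j : Fin t.length) (δ δ' : Ordinal), δ ∈ Δ → δ' ∈ Δ →
        (i ≠ j ∨ δ ≠ δ') → u (↑i + 1) δ ≠ u (↑j + 1) δ' := by
      have hlt : ∀ (i j : Fin t.length) (δ δ' : Ordinal), δ ∈ Δ → δ' ∈ Δ →
          δ < δ' → u (↑i + 1) δ < u (↑j + 1) δ' := by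
        intro i j δ δ' hδ hδ' hlt
        calc u (↑i + 1) δ ≤ u t.length δ := humono δ hδ.1 _ _ i.2
        _ < δ' := hδ'.2 δ hlt
        _ ≤ u (↑j + 1) δ' := (hubasic δ' hδ'.1 (↑j + 1)).2
      have hlt2 : ∀ (i j : Fin t.length) (δ : Ordinal), δ ∈ Δ → (i : ℕ) < j →
          u (↑i + 1) δ < u (↑j + 1) δ := by
        intro i j δ hδ hij
        have : ∀ m n : ℕ, m < n → n < t.length → u (m + 1) δ < u (n + 1) δ := by
          intro m n hmn hn
          have h1 : u (m + 1) δ ≤ u n δ := humono δ hδ.1 _ _ hmn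
          exact lt_of_le_of_lt h1 (hustrict δ hδ.1 n hn)
        exact this ↑i ↑j hij j.2
      intro i j δ δ' hδ hδ' hne heq
      rcases lt_trichotomy δ δ' with h | h | h
      · exact absurd heq (hlt i j δ δ' hδ hδ' h).ne
      · subst h
        rcases hne with hij | hδδ
        · rcases Ne.lt_or_gt (fun hc => hij (Fin.ext hc)) with h' | h'
          · exact absurd heq (hlt2 i j δ hδ h').ne
          · exact absurd heq.symm (hlt2 j i δ hδ h').ne
        · exact hδδ rfl
      · exact absurd heq.symm (hlt j i δ' δ hδ' hδ h).ne
    refine ⟨t.length, fun i => E '' (W i), fun i => ⟨?_, ?_⟩, ?_⟩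
    · rintro B ⟨α, hα, rfl⟩; exact hEmem α (hWsub i hα)
    · refine le_antisymm ?_ ?_
      · rw [← hcard]
        refine Cardinal.mk_le_mk_of_subset ?_
        rintro B ⟨α, hα, rfl⟩; exact hEmem α (hWsub i hα)
      · exact aux_card_ge hreg (hWsub i) (hWunb i) E
          (fun α hα β hβ => hEinj α (hWsub i hα) β (hWsub i hβ))
    · refine Set.Finite.subset (Set.finite_Iio (t.sum + 1)) ?_
      intro x hx
      by_contra hxn
      have hxge : ∀ i : Fin t.length, t.get i ≤ x := by
        intro i
        have h1 : t.get i ≤ t.sum :=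
          List.single_le_sum (fun y _ => Nat.zero_le y) _ (t.get_mem i)
        have h2 : t.sum < x := by
          simp only [Set.mem_Iio, not_lt] at hxn
          omega
        omega
      -- choose witnesses
      have hwit : ∀ i : Fin t.length, ∃ α, α ∈ W i ∧ x ∈ E α := by
        intro i
        obtain ⟨B, ⟨α, hα, rfl⟩, hxB⟩ := Set.mem_iInter.1 hx i
        exact ⟨α, hα, hxB⟩
      set s : Fin t.length → Ordinal := fun i => Classical.choose (hwit i) with hs
      have hsspec : ∀ i, s i ∈ W i ∧ x ∈ E (s i) := fun i => Classical.choose_spec (hwit i)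
      have hsinj : Function.Injective s := by
        intro i j hij
        by_contra hne
        obtain ⟨δ, hδ, hδe⟩ := (hsspec i).1
        obtain ⟨δ', hδ', hδ'e⟩ := (hsspec j).1
        have hδe' : u (↑i + 1) δ = s i := hδe
        have hδ'e' : u (↑j + 1) δ' = s j := hδ'e
        exact hkey i j δ δ' hδ hδ' (Or.inl hne) (hδe'.trans (hij.trans hδ'e'.symm))
      have := h2 s hsinj (fun i => by
        obtain ⟨δ, hδ, hδe⟩ := (hsspec i).1
        have hδe' : u (↑i + 1) δ = s i := hδe
        rw [← hδe']
        exact humemD δ hδ.1 i)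
      have hxmem : x ∈ MatInt A t s := by
        refine Set.mem_iInter.2 (fun i => ?_)
        exact ⟨hxge i, (hsspec i).2⟩
      rw [this] at hxmem
      exact hxmem
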